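/- For t ∈ ℝ, t > 0, and a complex number w with Im(w) > 0, the contour integral (1/(2πi)) ∫_{ℝ_{>0}·w} (2t/(z² − t²)) e^{−w/z} dz equals −(1/(2π)) ∫₀^∞ (2t/(σ² + t²)) e^{iw/σ} dσ, i.e. the ray of integration ℝ_{>0}·w can be rotated to the positive imaginary axis z = iσ without changing the value of the integral. -/

import Mathlib

open Real MeasureTheory Complex
open Set Filter

/-- `∫₀^∞ e^{-cu} du = 1/c` for `Re c > 0`. -/
lemma my_integral_cexp (c : ℂ) (hc : 0 < c.re) :
    ∫ u in Set.Ioi (0:ℝ), Complex.exp (-(c * u)) = 1 / c := by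
  have hc0 : c ≠ 0 := fun h => by simp [h] at hc
  have hd : ∀ x ∈ Set.Ici (0:ℝ),
      HasDerivAt (fun u : ℝ => -Complex.exp (-(c * u)) / c) (Complex.exp (-(c * x))) x := by
    intro x _
    have h1 : HasDerivAt (fun z : ℂ => -(c * z)) (-c) x := by
      have := ((hasDerivAt_id (x:ℂ)).const_mul c).neg
      simp only [id_eq, mul_one] at this
      exact this
    have h2 := (Complex.hasDerivAt_exp (-(c * x))).comp (x:ℂ) h1
    have h3 := (h2.neg).div_const c
    have h4 := h3.comp_ofReal
    convert h4 using 1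
    · funext y; simp [Function.comp_apply, neg_div]
    · field_simp
  have hint : IntegrableOn (fun u : ℝ => Complex.exp (-(c * u))) (Set.Ioi 0) := by
    have hb : IntegrableOn (fun u : ℝ => Real.exp (-c.re * u)) (Set.Ioi 0) :=
      exp_neg_integrableOn_Ioi 0 hc
    refine hb.integrable.mono' ?_ ?_
    · exact (Complex.continuous_exp.comp (by continuity)).aestronglyMeasurable
    · filter_upwards with u
      rw [Complex.norm_exp]
      simp [neg_mul]
  have htend : Tendsto (fun u : ℝ => -Complex.exp (-(c * u)) / c) atTop (nhds 0) := by
    rw [tendsto_zero_iff_norm_tendsto_zero]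
    have : (fun u : ℝ => ‖-Complex.exp (-(c * u)) / c‖)
        = fun u : ℝ => Real.exp (-(c.re * u)) / ‖c‖ := by
      ext u
      rw [norm_div, norm_neg, Complex.norm_exp]
      simp
    rw [this]
    have h1 : Tendsto (fun u : ℝ => c.re * u) atTop atTop :=
      Tendsto.const_mul_atTop hc tendsto_id
    simpa [Function.comp_def] using
      (Real.tendsto_exp_neg_atTop_nhds_zero.comp h1).div_const ‖c‖
  have := integral_Ioi_of_hasDerivAt_of_tendsto' hd hint htend
  rw [this]
  simp [neg_div]

/-- Contour rotation for a single partial fraction, via Fubini. -/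
lemma my_swap (w : ℂ) (hw : 0 < w.im) (r : ℝ) :
    ∫ u in Set.Ioi (0:ℝ), Complex.exp (-(u:ℂ)) / (w + r * u)
      = -Complex.I * ∫ x in Set.Ioi (0:ℝ),
          Complex.exp (Complex.I * w * x) / (1 - Complex.I * r * x) := by
  set G : ℝ → ℝ → ℂ := fun u x =>
    Complex.exp (-(u:ℂ)) * Complex.exp (Complex.I * w * x) * Complex.exp (Complex.I * r * u * x)
    with hG
  have hnorm : ∀ u x : ℝ, ‖G u x‖ = Real.exp (-u) * Real.exp (-w.im * x) := by
    intro u x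
    have h1 : (-(u:ℂ)).re = -u := by simp
    have h2 : (Complex.I * w * x).re = -w.im * x := by simp
    have h3 : (Complex.I * r * u * x).re = 0 := by
      simp [Complex.mul_re, Complex.mul_im]
    rw [hG]
    dsimp only
    rw [norm_mul, norm_mul,
      Complex.norm_exp, Complex.norm_exp, Complex.norm_exp, h1, h2, h3, Real.exp_zero, mul_one]
  have hGint : Integrable (Function.uncurry G)
      ((volume.restrict (Set.Ioi (0:ℝ))).prod (volume.restrict (Set.Ioi (0:ℝ)))) := by
    have hb : Integrable (fun p : ℝ × ℝ => Real.exp (-p.1) * Real.exp (-w.im * p.2))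
        ((volume.restrict (Set.Ioi (0:ℝ))).prod (volume.restrict (Set.Ioi (0:ℝ)))) := by
      have h1 : Integrable (fun u : ℝ => Real.exp (-u)) (volume.restrict (Set.Ioi (0:ℝ))) := by
        exact (by simpa using exp_neg_integrableOn_Ioi 0 one_pos :
          IntegrableOn (fun u : ℝ => Real.exp (-u)) (Set.Ioi 0))
      have h2 : Integrable (fun x : ℝ => Real.exp (-w.im * x))
          (volume.restrict (Set.Ioi (0:ℝ))) := exp_neg_integrableOn_Ioi 0 hw
      exact h1.mul_prod h2
    refine hb.mono' ?_ ?_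
    · apply Continuous.aestronglyMeasurable
      simp only [hG, Function.uncurry_def]
      fun_prop
    · filter_upwards with p
      rw [Function.uncurry_def, hnorm p.1 p.2]
  have hswap : (∫ u in Set.Ioi (0:ℝ), ∫ x in Set.Ioi (0:ℝ), G u x)
      = ∫ x in Set.Ioi (0:ℝ), ∫ u in Set.Ioi (0:ℝ), G u x :=
    integral_integral_swap hGint
  -- inner integral in `x`
  have hinx : ∀ u : ℝ, (∫ x in Set.Ioi (0:ℝ), G u x)
      = Complex.I * (Complex.exp (-(u:ℂ)) / (w + r * u)) := by
    intro u
    have hz : w + (r:ℂ) * u ≠ 0 := by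
      intro h
      have : (w + (r:ℂ) * u).im = 0 := by rw [h]; simp
      simp only [Complex.add_im, Complex.mul_im, Complex.ofReal_im, Complex.ofReal_re] at this
      simp at this
      linarith [hw, this]
    have hc : (0:ℝ) < (-(Complex.I * (w + r * u))).re := by
      simpa [Complex.mul_re] using hw
    have step : (∫ x in Set.Ioi (0:ℝ), G u x)
        = ∫ x in Set.Ioi (0:ℝ),
            Complex.exp (-(u:ℂ)) * Complex.exp (-(-(Complex.I * (w + r * u)) * x)) := by
      refine setIntegral_congr_fun measurableSet_Ioi fun x _ => ?_
      rw [hG]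
      dsimp only
      have hex : Complex.I * w * x + Complex.I * r * u * x
          = -(-(Complex.I * (w + r * u)) * x) := by ring
      rw [mul_assoc, ← Complex.exp_add, hex]
    rw [step, MeasureTheory.integral_const_mul, my_integral_cexp _ hc]
    have h9 : (1:ℂ) / (-(Complex.I * (w + r * u))) = Complex.I * (w + r * u)⁻¹ := by
      rw [one_div, inv_neg, mul_inv, Complex.inv_I]
      ring
    rw [h9, div_eq_mul_inv]
    ring
  -- inner integral in `u`
  have hinu : ∀ x : ℝ, (∫ u in Set.Ioi (0:ℝ), G u x)
      = Complex.exp (Complex.I * w * x) / (1 - Complex.I * r * x) := by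
    intro x
    have hc : (0:ℝ) < ((1 : ℂ) - Complex.I * r * x).re := by
      simp [Complex.mul_re]
    have step : (∫ u in Set.Ioi (0:ℝ), G u x)
        = ∫ u in Set.Ioi (0:ℝ),
            Complex.exp (Complex.I * w * x)
              * Complex.exp (-(((1:ℂ) - Complex.I * r * x) * u)) := by
      refine setIntegral_congr_fun measurableSet_Ioi fun u _ => ?_
      rw [hG]
      dsimp only
      have hex : -(u:ℂ) + Complex.I * r * u * x
          = -(((1:ℂ) - Complex.I * r * x) * u) := by ring
      rw [mul_comm (Complex.exp (-(u:ℂ))), mul_assoc, ← Complex.exp_add, hex]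
    rw [step, MeasureTheory.integral_const_mul, my_integral_cexp _ hc, mul_one_div]
  have hL : (∫ u in Set.Ioi (0:ℝ), ∫ x in Set.Ioi (0:ℝ), G u x)
      = Complex.I * ∫ u in Set.Ioi (0:ℝ), Complex.exp (-(u:ℂ)) / (w + r * u) := by
    rw [← MeasureTheory.integral_const_mul]
    exact setIntegral_congr_fun measurableSet_Ioi fun u _ => hinx u
  have hR : (∫ x in Set.Ioi (0:ℝ), ∫ u in Set.Ioi (0:ℝ), G u x)
      = ∫ x in Set.Ioi (0:ℝ),
          Complex.exp (Complex.I * w * x) / (1 - Complex.I * r * x) :=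
    setIntegral_congr_fun measurableSet_Ioi fun x _ => hinu x
  rw [hL, hR] at hswap
  rw [← hswap, ← mul_assoc]
  simp

lemma my_ne (w : ℂ) (hw : 0 < w.im) (r u : ℝ) : w + (r:ℂ) * u ≠ 0 := by
  intro h
  have : (w + (r:ℂ) * u).im = 0 := by rw [h]; rfl
  simp at this
  linarith

lemma my_int_f (w : ℂ) (hw : 0 < w.im) (r : ℝ) :
    IntegrableOn (fun u : ℝ => Complex.exp (-(u:ℂ)) / (w + r * u)) (Set.Ioi 0) := by
  have hb : IntegrableOn (fun u : ℝ => Real.exp (-1 * u) / w.im) (Set.Ioi 0) :=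
    (exp_neg_integrableOn_Ioi 0 one_pos).div_const _
  refine hb.integrable.mono' ?_ ?_
  · apply ContinuousOn.aestronglyMeasurable ?_ measurableSet_Ioi
    apply Continuous.continuousOn
    exact (Complex.continuous_exp.comp (by continuity)).div (by continuity)
      fun u => my_ne w hw r u
  · filter_upwards with u
    rw [norm_div, Complex.norm_exp]
    have h1 : (-(u:ℂ)).re = -1 * u := by simp
    rw [h1]
    gcongr
    calc w.im ≤ |(w + (r:ℂ) * u).im| := by simp [le_abs, hw.le]
    _ ≤ ‖w + (r:ℂ) * u‖ := Complex.abs_im_le_norm _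

lemma my_int_g (w : ℂ) (hw : 0 < w.im) (r : ℝ) :
    IntegrableOn (fun x : ℝ => Complex.exp (Complex.I * w * x) / (1 - Complex.I * r * x))
      (Set.Ioi 0) := by
  have hne : ∀ x : ℝ, (1:ℂ) - Complex.I * r * x ≠ 0 := by
    intro x h
    have : ((1:ℂ) - Complex.I * r * x).re = 0 := by rw [h]; rfl
    simp at this
  have hb : IntegrableOn (fun x : ℝ => Real.exp (-w.im * x) / 1) (Set.Ioi 0) :=
    (exp_neg_integrableOn_Ioi 0 hw).div_const _
  refine hb.integrable.mono' ?_ ?_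
  · apply ContinuousOn.aestronglyMeasurable ?_ measurableSet_Ioi
    apply Continuous.continuousOn
    exact (Complex.continuous_exp.comp (by continuity)).div (by continuity) hne
  · filter_upwards with x
    rw [norm_div, Complex.norm_exp]
    have h1 : (Complex.I * w * x).re = -w.im * x := by simp
    rw [h1]
    gcongr
    calc (1:ℝ) ≤ |((1:ℂ) - Complex.I * r * x).re| := by simp
    _ ≤ ‖(1:ℂ) - Complex.I * r * x‖ := Complex.abs_re_le_norm _

lemma my_reduced (t : ℝ) (ht : 0 < t) (w : ℂ) (hw : 0 < w.im) :
    ∫ u in Set.Ioi (0:ℝ), 2 * t * w * Complex.exp (-(u:ℂ)) / (w ^ 2 - t ^ 2 * u ^ 2)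
      = -Complex.I * ∫ x in Set.Ioi (0:ℝ),
          2 * t * Complex.exp (Complex.I * w * x) / (1 + t ^ 2 * x ^ 2) := by
  have hsplit : ∀ u : ℝ,
      2 * t * w * Complex.exp (-(u:ℂ)) / (w ^ 2 - t ^ 2 * u ^ 2)
        = t * (Complex.exp (-(u:ℂ)) / (w + ((-t:ℝ):ℂ) * u))
          + t * (Complex.exp (-(u:ℂ)) / (w + (t:ℂ) * u)) := by
    intro u
    have h1 := my_ne w hw (-t) u
    have h2 := my_ne w hw t u
    push_cast at h1 ⊢
    have hfac : w ^ 2 - (t:ℂ) ^ 2 * (u:ℂ) ^ 2 = (w + -(t:ℂ) * u) * (w + (t:ℂ) * u) := by ring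
    rw [← mul_div_assoc, ← mul_div_assoc, div_add_div _ _ h1 h2, hfac,
      div_eq_div_iff (mul_ne_zero h1 h2) (mul_ne_zero h1 h2)]
    ring
  rw [setIntegral_congr_fun measurableSet_Ioi fun u _ => hsplit u]
  rw [integral_add ((my_int_f w hw (-t)).const_mul _) ((my_int_f w hw t).const_mul _),
    MeasureTheory.integral_const_mul, MeasureTheory.integral_const_mul,
    my_swap w hw (-t), my_swap w hw t]
  have hcombine : ∀ x : ℝ,
      t * (Complex.exp (Complex.I * w * x) / (1 - Complex.I * ((-t:ℝ):ℂ) * x))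
          + t * (Complex.exp (Complex.I * w * x) / (1 - Complex.I * (t:ℂ) * x))
        = 2 * t * Complex.exp (Complex.I * w * x) / (1 + t ^ 2 * x ^ 2) := by
    intro x
    have h1 : (1:ℂ) - Complex.I * ((-t:ℝ):ℂ) * x ≠ 0 := by
      intro h
      have : ((1:ℂ) - Complex.I * ((-t:ℝ):ℂ) * x).re = 0 := by rw [h]; rfl
      simp at this
    have h2 : (1:ℂ) - Complex.I * (t:ℂ) * x ≠ 0 := by
      intro h
      have : ((1:ℂ) - Complex.I * (t:ℂ) * x).re = 0 := by rw [h]; rfl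
      simp at this
    have h3 : (1:ℂ) + (t:ℂ) ^ 2 * (x:ℂ) ^ 2 ≠ 0 := by
      have : ((1:ℝ) + t ^ 2 * x ^ 2 : ℝ) ≠ 0 := by positivity
      simpa using Complex.ofReal_ne_zero.mpr this
    push_cast at h1 ⊢
    have hfac : (1:ℂ) + (t:ℂ) ^ 2 * (x:ℂ) ^ 2
        = (1 - Complex.I * -(t:ℂ) * x) * (1 - Complex.I * (t:ℂ) * x) := by
      have : ((1:ℂ) - Complex.I * -(t:ℂ) * x) * (1 - Complex.I * (t:ℂ) * x)
          = 1 - (t:ℂ) ^ 2 * (x:ℂ) ^ 2 * Complex.I ^ 2 := by ring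
      rw [this, Complex.I_sq]
      ring
    rw [← mul_div_assoc, ← mul_div_assoc, div_add_div _ _ h1 h2, hfac,
      div_eq_div_iff (mul_ne_zero h1 h2) (mul_ne_zero h1 h2)]
    ring
  rw [← setIntegral_congr_fun measurableSet_Ioi fun x _ => hcombine x]
  rw [integral_add ((my_int_g w hw (-t)).const_mul _) ((my_int_g w hw t).const_mul _),
    MeasureTheory.integral_const_mul, MeasureTheory.integral_const_mul]
  ring

/-- for `t > 0` real and `w ∈ ℂ` with `Im w > 0`, the contour integral of
`(2t/(z² − t²)) e^{−w/z}` over the ray `ℝ_{>0}·w` (parametrised by `z = s·w`, `s > 0`)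
can be rotated to the positive imaginary axis `z = iσ`:
`(1/(2πi)) ∫_{ℝ_{>0}w} (2t/(z²−t²)) e^{−w/z} dz = −(1/(2π)) ∫₀^∞ (2t/(σ²+t²)) e^{iw/σ} dσ`. -/
theorem contour_rotation (t : ℝ) (ht : 0 < t) (w : ℂ) (hw : 0 < w.im) :
    (1 / (2 * Real.pi * Complex.I)) *
        ∫ s in Set.Ioi (0 : ℝ),
          (2 * (t : ℂ) / ((s * w) ^ 2 - (t : ℂ) ^ 2)) * Complex.exp (-(w / (s * w))) * w
      = -(1 / (2 * Real.pi)) *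
        ∫ σ in Set.Ioi (0 : ℝ),
          (2 * (t : ℂ) / ((σ : ℂ) ^ 2 + (t : ℂ) ^ 2)) * Complex.exp (Complex.I * w / σ) := by
  have hw0 : w ≠ 0 := by
    intro h; rw [h] at hw; simp at hw
  set funL : ℝ → ℂ := fun u =>
    2 * t * w * Complex.exp (-(u:ℂ)) / (w ^ 2 - (t:ℂ) ^ 2 * (u:ℂ) ^ 2) with hfunL
  set funR : ℝ → ℂ := fun x =>
    2 * t * Complex.exp (Complex.I * w * x) / (1 + (t:ℂ) ^ 2 * (x:ℂ) ^ 2) with hfunR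
  have hp : (-1:ℝ) ≠ 0 := by norm_num
  have hA := MeasureTheory.integral_comp_rpow_Ioi funL hp
  have hB := MeasureTheory.integral_comp_rpow_Ioi funR hp
  have hs2 : ∀ s : ℝ, s ^ ((-1:ℝ) - 1) = (s ^ 2)⁻¹ := by
    intro s
    rw [show ((-1:ℝ) - 1) = ((-2:ℤ):ℝ) by norm_num, Real.rpow_intCast, zpow_neg]
    norm_cast
  have hLeq : (∫ s in Set.Ioi (0:ℝ),
      (2 * (t : ℂ) / ((s * w) ^ 2 - (t : ℂ) ^ 2)) * Complex.exp (-(w / (s * w))) * w)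
      = ∫ u in Set.Ioi (0:ℝ), funL u := by
    rw [← hA]
    refine setIntegral_congr_fun measurableSet_Ioi fun s hs => ?_
    have hs0 : s ≠ 0 := (ne_of_gt hs)
    have hs0' : (s:ℂ) ≠ 0 := Complex.ofReal_ne_zero.mpr hs0
    rw [Real.rpow_neg_one, hs2, show |(-1:ℝ)| = 1 from by norm_num, one_mul, hfunL]
    dsimp only
    rw [Complex.real_smul]
    push_cast
    have hexp : w / ((s:ℂ) * w) = (s:ℂ)⁻¹ := by
      rw [mul_comm, div_mul_eq_div_div, div_self hw0, one_div]
    have hD : ((s:ℂ) ^ 2) * (w ^ 2 - (t:ℂ) ^ 2 * ((s:ℂ)⁻¹) ^ 2) = ((s:ℂ) * w) ^ 2 - (t:ℂ) ^ 2 := by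
      field_simp
    rw [hexp, div_eq_mul_inv, div_eq_mul_inv, ← hD, mul_inv]
    ring
  have hReq : (∫ σ in Set.Ioi (0:ℝ),
      (2 * (t : ℂ) / ((σ : ℂ) ^ 2 + (t : ℂ) ^ 2)) * Complex.exp (Complex.I * w / σ))
      = ∫ x in Set.Ioi (0:ℝ), funR x := by
    rw [← hB]
    refine setIntegral_congr_fun measurableSet_Ioi fun s hs => ?_
    have hs0 : s ≠ 0 := (ne_of_gt hs)
    have hs0' : (s:ℂ) ≠ 0 := Complex.ofReal_ne_zero.mpr hs0
    rw [Real.rpow_neg_one, hs2, show |(-1:ℝ)| = 1 from by norm_num, one_mul, hfunR]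
    dsimp only
    rw [Complex.real_smul]
    push_cast
    have hD : ((s:ℂ) ^ 2) * (1 + (t:ℂ) ^ 2 * ((s:ℂ)⁻¹) ^ 2) = (s:ℂ) ^ 2 + (t:ℂ) ^ 2 := by
      field_simp
    rw [div_eq_mul_inv (Complex.I * w), div_eq_mul_inv, div_eq_mul_inv, ← hD, mul_inv]
    ring
  rw [hLeq, hReq, my_reduced t ht w hw, ← mul_assoc]
  congr 1
  have hπ : ((Real.pi : ℝ) : ℂ) ≠ 0 := Complex.ofReal_ne_zero.mpr Real.pi_ne_zero
  field_simp
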